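/- There exist sets A, B ⊆ ℕ such that B is use-bounded-from-below reducible to A but B is not mod-finite reducible to A. -/

import Mathlib

open Filter

/-- A finite record of oracle query answers: a finite list of (position, bit) pairs. -/
abbrev FinInfo : Type := List (ℕ × Bool)

/-- Two finite query-answer records are compatible if they agree wherever both answer. -/
def FinInfo.Compatible (σ τ : FinInfo) : Prop :=
  ∀ p ∈ σ, ∀ q ∈ τ, p.1 = q.1 → p.2 = q.2

/-- The answers recorded in `σ` are exactly those given by the characteristic
function of the set `C`. -/
def AgreesSet (σ : FinInfo) (C : Set ℕ) : Prop :=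
  ∀ p ∈ σ, (p.2 = true ↔ p.1 ∈ C)

/-- The answers recorded in `σ` are all given by the partial oracle `g`. -/
def AgreesPart (σ : FinInfo) (g : ℕ →. Bool) : Prop :=
  ∀ p ∈ σ, p.2 ∈ g p.1

/-- `g` is a partial oracle for the set `A`: a partial function from `ℕ` to `Bool`
agreeing with the characteristic function of `A` on its domain. -/
def IsPartialOracle (g : ℕ →. Bool) (A : Set ℕ) : Prop :=
  ∀ n b, b ∈ g n → (b = true ↔ n ∈ A)

/-- The domain of a partial oracle. -/
def pDom (g : ℕ →. Bool) : Set ℕ := {n | (g n).Dom}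

/-- A Turing functional (oracle Turing machine program), presented as a computable
enumeration of axioms `(σ, n, b)`, meaning: if the oracle answers the queries
recorded in `σ` as `σ` prescribes, then the machine halts on input `n` with
output `b`.  Oracle queries are made in parallel, so with a partial oracle the
machine halts on `n` iff some axiom for `n` is answered by the partial oracle.
Determinism of the machine is reflected in the requirement that axioms with
compatible query answers give equal outputs. -/
structure TuringFunctional where
  axs : ℕ → Option (FinInfo × ℕ × Bool)
  axs_computable : Computable axs
  consistent : ∀ k₁ k₂ σ₁ σ₂ n b₁ b₂, axs k₁ = some (σ₁, n, b₁) →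
    axs k₂ = some (σ₂, n, b₂) → σ₁.Compatible σ₂ → b₁ = b₂

namespace TuringFunctional

/-- `Φ^C(n)` halts with output `b` (total oracle `C`). -/
def HaltsT (Φ : TuringFunctional) (C : Set ℕ) (n : ℕ) (b : Bool) : Prop :=
  ∃ k σ, Φ.axs k = some (σ, n, b) ∧ AgreesSet σ C

/-- `Φ^g(n)` halts with output `b` (partial oracle `g`). -/
def HaltsP (Φ : TuringFunctional) (g : ℕ →. Bool) (n : ℕ) (b : Bool) : Prop :=
  ∃ k σ, Φ.axs k = some (σ, n, b) ∧ AgreesPart σ g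

/-- `Φ^C` is total. -/
def TotalOn (Φ : TuringFunctional) (C : Set ℕ) : Prop := ∀ n, ∃ b, Φ.HaltsT C n b

/-- The set `{n : Φ^C(n) = B(n)}` on which `Φ^C` halts and agrees with the
characteristic function of `B`. -/
def AgreeSet (Φ : TuringFunctional) (C B : Set ℕ) : Set ℕ :=
  {n | ∃ b, Φ.HaltsT C n b ∧ (b = true ↔ n ∈ B)}

/-- `Φ^A = B`: with oracle `A`, `Φ` is total and computes the characteristic
function of `B`. -/
def FunEq (Φ : TuringFunctional) (A B : Set ℕ) : Prop :=
  Φ.TotalOn A ∧ ∀ n b, Φ.HaltsT A n b → (b = true ↔ n ∈ B)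

/-- `Φ^g ≃ B`: every halting output of `Φ` with partial oracle `g` agrees with
the characteristic function of `B`. -/
def PAgrees (Φ : TuringFunctional) (g : ℕ →. Bool) (B : Set ℕ) : Prop :=
  ∀ n b, Φ.HaltsP g n b → (b = true ↔ n ∈ B)

/-- The domain of `Φ^g`. -/
def PDomain (Φ : TuringFunctional) (g : ℕ →. Bool) : Set ℕ :=
  {n | ∃ b, Φ.HaltsP g n b}

/-- The axiom with index `k` applies to oracle `C` on input `n`. -/
def AppliesAt (Φ : TuringFunctional) (C : Set ℕ) (n k : ℕ) : Prop :=
  ∃ σ b, Φ.axs k = some (σ, n, b) ∧ AgreesSet σ C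

/-- The (halting) computation of `Φ^C(n)` queries the oracle bit `C(m)`:
the first axiom in the enumeration that applies to `C` on input `n`
records an answer to a query at position `m`. -/
def QueriesAt (Φ : TuringFunctional) (C : Set ℕ) (n m : ℕ) : Prop :=
  ∃ k σ b, Φ.axs k = some (σ, n, b) ∧ AgreesSet σ C ∧
    (∀ k' < k, ¬ Φ.AppliesAt C n k') ∧ ∃ p ∈ σ, p.1 = m

end TuringFunctional

/-- `D ⊆ ℕ` has (asymptotic) density 1. -/
def DensityOne (D : Set ℕ) : Prop :=
  Filter.Tendsto (fun n : ℕ => ((D ∩ Set.Iio n).ncard : ℝ) / n) Filter.atTop (nhds 1)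

/-- `B ≤₁ A`: 1-reducibility. -/
def OneRed (B A : Set ℕ) : Prop :=
  ∃ f : ℕ → ℕ, Computable f ∧ Function.Injective f ∧ ∀ n, n ∈ B ↔ f n ∈ A

/-- `B ≤_T A`: Turing reducibility. -/
def TuringRed (B A : Set ℕ) : Prop :=
  ∃ Φ : TuringFunctional, Φ.FunEq A B

/-- `B ≤_mr A`: mod-recursive reducibility. -/
def ModRecRed (B A : Set ℕ) : Prop :=
  ∃ Φ : TuringFunctional, Φ.FunEq A B ∧
    ∀ C : Set ℕ, ComputablePred (fun n => (n ∈ C ↔ n ∈ A)) →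
      Φ.TotalOn C ∧ ComputablePred (fun n => n ∈ Φ.AgreeSet C B)

/-- `B ≤_mf A`: mod-finite reducibility. -/
def ModFinRed (B A : Set ℕ) : Prop :=
  ∃ Φ : TuringFunctional, Φ.FunEq A B ∧
    ∀ C : Set ℕ, {n | ¬ (n ∈ C ↔ n ∈ A)}.Finite →
      Φ.TotalOn C ∧ (Φ.AgreeSet C B)ᶜ.Finite

/-- `B ≤_cor A`: coarse reducibility. -/
def CoarseRed (B A : Set ℕ) : Prop :=
  ∃ Φ : TuringFunctional,
    ∀ C : Set ℕ, DensityOne {n | n ∈ C ↔ n ∈ A} →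
      Φ.TotalOn C ∧ DensityOne (Φ.AgreeSet C B)

/-- `B ≤_cf A`: cofinite reducibility. -/
def CofinRed (B A : Set ℕ) : Prop :=
  ∃ Φ : TuringFunctional, Φ.FunEq A B ∧
    ∀ g : ℕ →. Bool, IsPartialOracle g A → (pDom g)ᶜ.Finite →
      Φ.PAgrees g B ∧ (Φ.PDomain g)ᶜ.Finite

/-- `B ≤_g A`: generic reducibility. -/
def GenericRed (B A : Set ℕ) : Prop :=
  ∃ Φ : TuringFunctional, Φ.FunEq A B ∧
    ∀ g : ℕ →. Bool, IsPartialOracle g A → DensityOne (pDom g) →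
      Φ.PAgrees g B ∧ DensityOne (Φ.PDomain g)

/-- `B ≤_ii A`: infinite-information reducibility. -/
def IIRed (B A : Set ℕ) : Prop :=
  ∃ Φ : TuringFunctional,
    ∀ g : ℕ →. Bool, IsPartialOracle g A → (pDom g).Infinite →
      Φ.PAgrees g B ∧ (Φ.PDomain g).Infinite

/-- `B ≤_ubfb A`: use-bounded-from-below reducibility. -/
def UbfbRed (B A : Set ℕ) : Prop :=
  ∃ Φ : TuringFunctional, Φ.FunEq A B ∧
    ∀ m : ℕ, ∀ᶠ n in Filter.atTop, ¬ Φ.QueriesAt A n m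

/-- `R(S) = {2^n · m : n ∈ S, m odd}`. -/
def Rmap (S : Set ℕ) : Set ℕ :=
  {x | ∃ n ∈ S, ∃ m : ℕ, Odd m ∧ x = 2 ^ n * m}

/-- `R̃(S) = {2^n + m : n ∈ S, m < 2^n}`. -/
def Rtilde (S : Set ℕ) : Set ℕ :=
  {x | ∃ n ∈ S, ∃ m : ℕ, m < 2 ^ n ∧ x = 2 ^ n + m}

/-- The Turing join `A ⊕ B`. -/
def turingJoin (A B : Set ℕ) : Set ℕ :=
  {x | (∃ n ∈ A, x = 2 * n) ∨ (∃ n ∈ B, x = 2 * n + 1)}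

namespace UbfbNotMf

open Classical in
noncomputable section

/-! ### Basic coding -/

def coordOf (x : ℕ) : ℕ := (Nat.unpair x).1

def bitOf (x : ℕ) : Bool := decide ((Nat.unpair x).2 % 2 = 1)

def claimIn (X : Set ℕ) (n y : ℕ) : Prop := y ∈ X ∧ coordOf y = n

def minClaim (X : Set ℕ) (n y : ℕ) : Prop :=
  claimIn X n y ∧ ∀ z, z < y → ¬ claimIn X n z

theorem minClaim_unique {X : Set ℕ} {n y y' : ℕ}
    (h : minClaim X n y) (h' : minClaim X n y') : y = y' := by
  rcases lt_trichotomy y y' with hl | he | hl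
  · exact absurd h.1 (h'.2 y hl)
  · exact he
  · exact absurd h'.1 (h.2 y' hl)

/-- decode: `n ∈ decodeB X` iff the least claim for `n` in `X` has bit `true`. -/
def decodeB (X : Set ℕ) : Set ℕ := {n | ∃ y, minClaim X n y ∧ bitOf y = true}

theorem mem_decodeB_iff {X : Set ℕ} {n y : ℕ} (h : minClaim X n y) :
    n ∈ decodeB X ↔ bitOf y = true := by
  constructor
  · rintro ⟨y', h', hb⟩
    rwa [minClaim_unique h h']
  · intro hb; exact ⟨y, h, hb⟩

/-! ### The ubfb witness functional Φ₀ -/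

def sigma0 (y : ℕ) : FinInfo :=
  ((List.range y).map fun x =>
    if coordOf x = coordOf y then (x, false) else (y, true)) ++ [(y, true)]

def axs0 (y : ℕ) : Option (FinInfo × ℕ × Bool) := some (sigma0 y, coordOf y, bitOf y)

theorem mem_sigma0 {y : ℕ} {p : ℕ × Bool} (hp : p ∈ sigma0 y) :
    p = (y, true) ∨ (p.1 < y ∧ coordOf p.1 = coordOf y ∧ p.2 = false) := by
  rcases List.mem_append.1 hp with h | h
  · rcases List.mem_map.1 h with ⟨x, hx, he⟩
    by_cases hc : coordOf x = coordOf y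
    · right
      rw [if_pos hc] at he
      subst he
      exact ⟨List.mem_range.1 hx, hc, rfl⟩
    · left; rw [if_neg hc] at he; exact he.symm
  · left; simpa using h

theorem sigma0_self_mem {y : ℕ} : ((y, true) : ℕ × Bool) ∈ sigma0 y :=
  List.mem_append.2 (Or.inr (by simp))

theorem sigma0_neg_mem {y x : ℕ} (hx : x < y) (hc : coordOf x = coordOf y) :
    ((x, false) : ℕ × Bool) ∈ sigma0 y := by
  refine List.mem_append.2 (Or.inl ?_)
  refine List.mem_map.2 ⟨x, List.mem_range.2 hx, ?_⟩
  rw [if_pos hc]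

/-- pinning: if the oracle agrees with `sigma0 y` then `y` is the least claim. -/
theorem sigma0_pin {y : ℕ} {X : Set ℕ} (h : AgreesSet (sigma0 y) X) :
    minClaim X (coordOf y) y := by
  constructor
  · exact ⟨(h _ sigma0_self_mem).1 rfl, rfl⟩
  · rintro z hz ⟨hzX, hzc⟩
    have := (h _ (sigma0_neg_mem hz hzc)).2 hzX
    simp at this

theorem axs0_consistent : ∀ k₁ k₂ σ₁ σ₂ n b₁ b₂, axs0 k₁ = some (σ₁, n, b₁) →
    axs0 k₂ = some (σ₂, n, b₂) → σ₁.Compatible σ₂ → b₁ = b₂ := by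
  intro k₁ k₂ σ₁ σ₂ n b₁ b₂ h₁ h₂ hc
  simp only [axs0, Option.some.injEq, Prod.mk.injEq] at h₁ h₂
  obtain ⟨hσ₁, hn₁, hb₁⟩ := h₁
  obtain ⟨hσ₂, hn₂, hb₂⟩ := h₂
  subst hσ₁ hσ₂ hb₁ hb₂
  rcases lt_trichotomy k₁ k₂ with hl | he | hl
  · have h1 : ((k₁, true) : ℕ × Bool) ∈ sigma0 k₁ := sigma0_self_mem
    have h2 : ((k₁, false) : ℕ × Bool) ∈ sigma0 k₂ :=
      sigma0_neg_mem hl (by rw [hn₁, hn₂])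
    have := hc _ h1 _ h2 rfl
    simp at this
  · subst he; rfl
  · have h1 : ((k₂, true) : ℕ × Bool) ∈ sigma0 k₂ := sigma0_self_mem
    have h2 : ((k₂, false) : ℕ × Bool) ∈ sigma0 k₁ :=
      sigma0_neg_mem hl (by rw [hn₁, hn₂])
    have := hc _ h2 _ h1 rfl
    simp at this

theorem coordOf_primrec : Primrec coordOf := Primrec.fst.comp Primrec.unpair

theorem bitOf_primrec : Primrec bitOf :=
  PrimrecPred.decide <| PrimrecRel.comp Primrec.eq
    (Primrec.nat_mod.comp (Primrec.snd.comp Primrec.unpair) (Primrec.const 2))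
    (Primrec.const 1)

theorem sigma0_primrec : Primrec sigma0 := by
  have hmap : Primrec fun y => (List.range y).map fun x =>
      if coordOf x = coordOf y then (x, false) else (y, true) := by
    refine Primrec.list_map Primrec.list_range ?_
    refine Primrec.ite ?_ ?_ ?_
    · exact PrimrecRel.comp Primrec.eq (coordOf_primrec.comp Primrec.snd)
        (coordOf_primrec.comp Primrec.fst)
    · exact Primrec.pair Primrec.snd (Primrec.const false)
    · exact Primrec.pair Primrec.fst (Primrec.const true)
  have hsing : Primrec fun y : ℕ => ([(y, true)] : FinInfo) :=
    Primrec₂.comp Primrec.list_cons (Primrec.pair Primrec.id (Primrec.const true))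
      (Primrec.const [])
  exact (Primrec₂.comp Primrec.list_append hmap hsing).of_eq fun y => rfl

theorem axs0_computable : Computable axs0 :=
  Primrec.to_comp <| Primrec.option_some.comp <|
    Primrec.pair sigma0_primrec (Primrec.pair coordOf_primrec bitOf_primrec)

def Phi0 : TuringFunctional := ⟨axs0, axs0_computable, axs0_consistent⟩

/-! ### Finite strings as oracle prefixes -/

def strTrue (α : List Bool) (x : ℕ) : Prop := α.getD x false = true

def strSet (α : List Bool) : Set ℕ := {x | strTrue α x}

theorem strTrue_lt {α : List Bool} {x : ℕ} (h : strTrue α x) : x < α.length := by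
  by_contra hx
  rw [strTrue, List.getD_eq_default _ _ (Nat.le_of_not_lt hx)] at h
  exact Bool.false_ne_true h

theorem strTrue_prefix_iff {α β : List Bool} (h : α <+: β) {x : ℕ} (hx : x < α.length) :
    (strTrue β x ↔ strTrue α x) := by
  obtain ⟨t, rfl⟩ := h
  rw [strTrue, strTrue, List.getD_append _ _ _ _ hx]

theorem strTrue_mono {α β : List Bool} (h : α <+: β) {x : ℕ} (hx : strTrue α x) :
    strTrue β x :=
  (strTrue_prefix_iff h (strTrue_lt hx)).2 hx

/-! ### Appending a claim -/

def claimPos (α : List Bool) (c : ℕ) (b : Bool) : ℕ :=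
  Nat.pair c (2 * (α.length + 1) + cond b 1 0)

def appendClaim (α : List Bool) (c : ℕ) (b : Bool) : List Bool :=
  α ++ List.replicate (claimPos α c b - α.length) false ++ [true]

theorem length_lt_claimPos (α : List Bool) (c : ℕ) (b : Bool) :
    α.length < claimPos α c b :=
  lt_of_lt_of_le (by cases b <;> simp [Nat.mul_add] <;> omega)
    (Nat.right_le_pair _ _)

theorem coordOf_claimPos (α : List Bool) (c : ℕ) (b : Bool) :
    coordOf (claimPos α c b) = c := by
  simp [coordOf, claimPos, Nat.unpair_pair]

theorem bitOf_claimPos (α : List Bool) (c : ℕ) (b : Bool) :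
    bitOf (claimPos α c b) = b := by
  cases b <;> simp [bitOf, claimPos, Nat.unpair_pair, Nat.mul_add, Nat.add_mod]

theorem length_appendClaim (α : List Bool) (c : ℕ) (b : Bool) :
    (appendClaim α c b).length = claimPos α c b + 1 := by
  have := Nat.le_of_lt (length_lt_claimPos α c b)
  simp [appendClaim]
  omega

theorem prefix_appendClaim (α : List Bool) (c : ℕ) (b : Bool) :
    α <+: appendClaim α c b := by
  rw [appendClaim, List.append_assoc]
  exact List.prefix_append _ _

theorem strTrue_appendClaim {α : List Bool} {c : ℕ} {b : Bool} {x : ℕ} :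
    strTrue (appendClaim α c b) x ↔ strTrue α x ∨ x = claimPos α c b := by
  have hlt := length_lt_claimPos α c b
  have hlen : (α ++ List.replicate (claimPos α c b - α.length) false).length
      = claimPos α c b := by simp; omega
  constructor
  · intro h
    have hx := strTrue_lt h
    rw [length_appendClaim] at hx
    rcases lt_trichotomy x (claimPos α c b) with h1 | h1 | h1
    · -- within α ++ replicate part
      simp only [strTrue, appendClaim] at h
      rw [List.getD_append _ _ _ _ (by rw [hlen]; exact h1)] at h
      rcases Nat.lt_or_ge x α.length with h2 | h2
      · left
        simp only [strTrue]
        rwa [List.getD_append _ _ _ _ h2] at h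
      · exfalso
        rw [List.getD_append_right _ _ _ _ h2] at h
        rw [List.getD_eq_getElem?_getD, List.getElem?_replicate,
          if_pos (by omega)] at h
        simp at h
    · right; exact h1
    · omega
  · rintro (h | rfl)
    · exact strTrue_mono (prefix_appendClaim α c b) h
    · simp only [strTrue, appendClaim]
      rw [List.getD_append_right _ _ _ _ (le_of_eq hlen)]
      rw [hlen, Nat.sub_self]
      rfl

/-! ### Tidying: claim every small unclaimed coordinate -/

def hasClaim (α : List Bool) (c : ℕ) : Prop := ∃ y, strTrue α y ∧ coordOf y = c

open Classical in
noncomputable def tidyGo (des : List ℕ) : List ℕ → List Bool → List Bool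
  | [], α => α
  | c :: cs, α =>
      tidyGo des cs (if c ∈ des ∨ hasClaim α c then α else appendClaim α c false)

noncomputable def tidy (α : List Bool) (des : List ℕ) : List Bool :=
  tidyGo des (List.range α.length) α

theorem tidyGo_prefix (des : List ℕ) : ∀ (l : List ℕ) (α : List Bool), α <+: tidyGo des l α := by
  intro l
  induction l with
  | nil => intro α; exact List.prefix_refl α
  | cons c cs ih =>
    intro α
    rw [tidyGo]
    by_cases h : c ∈ des ∨ hasClaim α c
    · rw [if_pos h]; exact ih α
    · rw [if_neg h]
      exact (prefix_appendClaim α c false).trans (ih _)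

theorem tidy_prefix (α : List Bool) (des : List ℕ) : α <+: tidy α des :=
  tidyGo_prefix des _ α

theorem tidyGo_sub (des : List ℕ) : ∀ (l : List ℕ) (α : List Bool) (x : ℕ),
    strTrue (tidyGo des l α) x → strTrue α x ∨ coordOf x ∉ des := by
  intro l
  induction l with
  | nil => intro α x h; exact Or.inl h
  | cons c cs ih =>
    intro α x h
    rw [tidyGo] at h
    by_cases hc : c ∈ des ∨ hasClaim α c
    · rw [if_pos hc] at h; exact ih α x h
    · rw [if_neg hc] at h
      rcases ih _ x h with h' | h'
      · rcases strTrue_appendClaim.1 h' with h'' | rfl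
        · exact Or.inl h''
        · right
          rw [coordOf_claimPos]
          intro hmem
          exact hc (Or.inl hmem)
      · exact Or.inr h'

theorem hasClaim_mono {α β : List Bool} (h : α <+: β) {c : ℕ} (hc : hasClaim α c) :
    hasClaim β c := by
  obtain ⟨y, hy, hyc⟩ := hc
  exact ⟨y, strTrue_mono h hy, hyc⟩

theorem tidyGo_claims (des : List ℕ) : ∀ (l : List ℕ) (α : List Bool) (c : ℕ),
    c ∈ l → c ∉ des → hasClaim (tidyGo des l α) c := by
  intro l
  induction l with
  | nil => intro α c hc; simp at hc
  | cons d ds ih =>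
    intro α c hc hcd
    rw [tidyGo]
    rcases List.mem_cons.1 hc with rfl | hc'
    · -- c = d : after this step it has a claim, and claims persist
      by_cases h : c ∈ des ∨ hasClaim α c
      · rw [if_pos h]
        rcases h with h | h
        · exact absurd h hcd
        · exact hasClaim_mono (tidyGo_prefix des ds α) h
      · rw [if_neg h]
        refine hasClaim_mono (tidyGo_prefix des ds _) ?_
        exact ⟨claimPos α c false, strTrue_appendClaim.2 (Or.inr rfl), coordOf_claimPos α c false⟩
    · by_cases h : d ∈ des ∨ hasClaim α d
      · rw [if_pos h]; exact ih α c hc' hcd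
      · rw [if_neg h]; exact ih _ c hc' hcd

theorem tidy_claims {α : List Bool} {des : List ℕ} {c : ℕ}
    (hc : c < α.length) (hcd : c ∉ des) : hasClaim (tidy α des) c :=
  tidyGo_claims des _ α c (List.mem_range.2 hc) hcd

theorem tidyGo_length (des : List ℕ) : ∀ (l : List ℕ) (α : List Bool),
    α.length ≤ (tidyGo des l α).length := by
  intro l α
  exact (tidyGo_prefix des l α).length_le

/-! ### The forcing construction -/

structure St where
  str : List Bool
  des : List ℕ

/-- The "kill witness" proposition for a functional at a state: there is a good
extension on which some axiom fires whose output disagrees with the least claim. -/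
def KWit (Φ : TuringFunctional) (s : St) : Prop :=
  ∃ β : List Bool, s.str <+: β ∧
    (∀ x, s.str.length ≤ x → strTrue β x → coordOf x ∉ s.des) ∧
    ∃ k σ n b, Φ.axs k = some (σ, n, b) ∧ (∀ p ∈ σ, (p : ℕ × Bool).1 < β.length) ∧
      AgreesSet σ (strSet β) ∧ ∃ y, minClaim (strSet β) n y ∧ bitOf y = !b

noncomputable def stepSt (Φ : TuringFunctional) (s : St) : St :=
  if h : KWit Φ s then ⟨tidy (Classical.choose h ++ [false]) s.des, s.des⟩
  else ⟨tidy (appendClaim s.str s.str.length false) (s.str.length :: s.des),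
        s.str.length :: s.des⟩

noncomputable def stages (F : ℕ → TuringFunctional) : ℕ → St
  | 0 => ⟨[], []⟩
  | e + 1 => stepSt (F e) (stages F e)

theorem strTrue_append_false {β : List Bool} {x : ℕ} :
    strTrue (β ++ [false]) x ↔ strTrue β x := by
  constructor
  · intro h
    have hx := strTrue_lt h
    simp at hx
    rcases Nat.lt_or_ge x β.length with h1 | h1
    · rwa [strTrue, List.getD_append _ _ _ _ h1] at h
    · exfalso
      have hxe : x = β.length := by omega
      rw [strTrue, List.getD_append_right _ _ _ _ h1, hxe, Nat.sub_self] at h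
      simp at h
  · exact strTrue_mono (List.prefix_append β [false])

theorem step_prefix (Φ : TuringFunctional) (s : St) : s.str <+: (stepSt Φ s).str := by
  rw [stepSt]
  by_cases h : KWit Φ s
  · rw [dif_pos h]
    exact ((Classical.choose_spec h).1.trans (List.prefix_append _ _)).trans
      (tidy_prefix _ _)
  · rw [dif_neg h]
    exact (prefix_appendClaim _ _ _).trans (tidy_prefix _ _)

theorem step_len (Φ : TuringFunctional) (s : St) :
    s.str.length < (stepSt Φ s).str.length := by
  rw [stepSt]
  by_cases h : KWit Φ s
  · rw [dif_pos h]
    have h1 : s.str.length ≤ (Classical.choose h).length :=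
      (Classical.choose_spec h).1.length_le
    have h2 := (tidy_prefix (Classical.choose h ++ [false]) s.des).length_le
    simp only [List.length_append, List.length_singleton] at h2
    show s.str.length < (tidy (Classical.choose h ++ [false]) s.des).length
    omega
  · rw [dif_neg h]
    have h1 := length_lt_claimPos s.str s.str.length false
    have h2 := (tidy_prefix (appendClaim s.str s.str.length false)
      (s.str.length :: s.des)).length_le
    rw [length_appendClaim] at h2
    show s.str.length < (tidy (appendClaim s.str s.str.length false)
      (s.str.length :: s.des)).length
    omega

theorem step_des_sub (Φ : TuringFunctional) (s : St) : s.des ⊆ (stepSt Φ s).des := by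
  rw [stepSt]
  by_cases h : KWit Φ s
  · rw [dif_pos h]
    exact fun a ha => ha
  · rw [dif_neg h]; exact List.subset_cons_self _ _

theorem step_desLt (Φ : TuringFunctional) (s : St)
    (hdes : ∀ d ∈ s.des, d < s.str.length) :
    ∀ d ∈ (stepSt Φ s).des, d < (stepSt Φ s).str.length := by
  have hlen := step_len Φ s
  rw [stepSt] at hlen ⊢
  by_cases h : KWit Φ s
  · rw [dif_pos h] at hlen ⊢
    intro d hd
    exact lt_trans (hdes d hd) hlen
  · rw [dif_neg h] at hlen ⊢
    intro d hd
    rcases List.mem_cons.1 hd with rfl | hd'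
    · exact hlen
    · exact lt_trans (hdes d hd') hlen

theorem step_good (Φ : TuringFunctional) (s : St)
    (hdes : ∀ d ∈ s.des, d < s.str.length) :
    ∀ x, s.str.length ≤ x → strTrue (stepSt Φ s).str x → coordOf x ∉ s.des := by
  intro x hx hT
  rw [stepSt] at hT
  by_cases h : KWit Φ s
  · rw [dif_pos h] at hT
    rcases tidyGo_sub s.des _ _ x hT with h' | h'
    · exact (Classical.choose_spec h).2.1 x hx (strTrue_append_false.1 h')
    · exact h'
  · rw [dif_neg h] at hT
    rcases tidyGo_sub _ _ _ x hT with h' | h'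
    · rcases strTrue_appendClaim.1 h' with h'' | rfl
      · exact absurd (strTrue_lt h'') (by omega)
      · rw [coordOf_claimPos]
        intro hmem
        exact absurd (hdes _ hmem) (lt_irrefl _)
    · intro hmem
      exact h' (List.mem_cons_of_mem _ hmem)

theorem step_hasClaim (Φ : TuringFunctional) (s : St) {c : ℕ}
    (hc : c < s.str.length) (hcd : c ∉ s.des) : hasClaim (stepSt Φ s).str c := by
  rw [stepSt]
  by_cases h : KWit Φ s
  · rw [dif_pos h]
    refine tidy_claims ?_ hcd
    have h1 : s.str.length ≤ (Classical.choose h).length :=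
      (Classical.choose_spec h).1.length_le
    show c < (Classical.choose h ++ [false]).length
    simp only [List.length_append, List.length_singleton]
    omega
  · rw [dif_neg h]
    refine tidy_claims ?_ ?_
    · rw [length_appendClaim]
      have := length_lt_claimPos s.str s.str.length false
      omega
    · intro hmem
      rcases List.mem_cons.1 hmem with rfl | h'
      · exact absurd hc (lt_irrefl _)
      · exact hcd h'

variable (F : ℕ → TuringFunctional)

theorem stages_prefix {e e' : ℕ} (h : e ≤ e') :
    (stages F e).str <+: (stages F e').str := by
  induction e' with
  | zero => rw [Nat.le_zero.1 h]
  | succ m ih =>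
    rcases Nat.le_succ_iff.1 h with h' | rfl
    · exact (ih h').trans (step_prefix (F m) (stages F m))
    · exact List.prefix_refl _

theorem stages_des_mono {e e' : ℕ} (h : e ≤ e') :
    (stages F e).des ⊆ (stages F e').des := by
  induction e' with
  | zero => rw [Nat.le_zero.1 h]; exact fun a ha => ha
  | succ m ih =>
    rcases Nat.le_succ_iff.1 h with h' | rfl
    · exact fun a ha => step_des_sub (F m) (stages F m) (ih h' ha)
    · exact fun a ha => ha

theorem stages_desLt (e : ℕ) : ∀ d ∈ (stages F e).des, d < (stages F e).str.length := by
  induction e with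
  | zero => intro d hd; simp [stages] at hd
  | succ m ih => exact step_desLt (F m) (stages F m) ih

theorem stages_len_le (e : ℕ) : e ≤ (stages F e).str.length := by
  induction e with
  | zero => exact Nat.zero_le _
  | succ m ih =>
    have := step_len (F m) (stages F m)
    exact Nat.succ_le_of_lt (lt_of_le_of_lt ih this)

/-- the limit set -/
def limA : Set ℕ := {x | ∃ e, strTrue (stages F e).str x}

def limB : Set ℕ := decodeB (limA F)

theorem limA_iff {e x : ℕ} (hx : x < (stages F e).str.length) :
    x ∈ limA F ↔ strTrue (stages F e).str x := by
  constructor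
  · rintro ⟨e', he'⟩
    rcases le_total e e' with h | h
    · exact (strTrue_prefix_iff (stages_prefix F h) hx).1 he'
    · exact strTrue_mono (stages_prefix F h) he'
  · intro h; exact ⟨e, h⟩

theorem goodChain {e x : ℕ} (hx : (stages F e).str.length ≤ x)
    (hA : x ∈ limA F) : coordOf x ∉ (stages F e).des := by
  obtain ⟨e', he'⟩ := hA
  induction e' with
  | zero =>
    exfalso
    have h1 := strTrue_lt he'
    have h2 : (stages F 0).str = [] := rfl
    rw [h2] at h1
    simp at h1
  | succ m ih =>
    rcases Nat.lt_or_ge x (stages F m).str.length with h1 | h1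
    · exact ih ((strTrue_prefix_iff (step_prefix (F m) (stages F m)) h1).1 he')
    · intro hmem
      by_cases hme : e ≤ m
      · exact step_good (F m) (stages F m) (stages_desLt F m) x h1 he'
          (stages_des_mono F hme hmem)
      · have h2 : (stages F (m+1)).str.length ≤ (stages F e).str.length :=
          (stages_prefix F (by omega : m + 1 ≤ e)).length_le
        have h3 := strTrue_lt he'
        omega

theorem all_claimed (c : ℕ) : ∃ y, y ∈ limA F ∧ coordOf y = c := by
  by_cases hdes : ∃ e, c ∈ (stages F e).des
  · -- c is designated: it got its claim at the designation stage
    classical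
    have h0 : ¬ c ∈ (stages F 0).des := by simp [stages]
    obtain ⟨e, he⟩ := hdes
    -- minimal stage
    induction e with
    | zero => exact absurd he h0
    | succ m ih =>
      by_cases hm : c ∈ (stages F m).des
      · exact ih hm
      · -- added at stage m
        rw [stages, stepSt] at he
        by_cases h : KWit (F m) (stages F m)
        · rw [dif_pos h] at he; exact absurd he hm
        · rw [dif_neg h] at he
          rcases List.mem_cons.1 he with hce | h'
          · refine ⟨claimPos (stages F m).str c false, ⟨m + 1, ?_⟩, coordOf_claimPos _ _ _⟩
            have hst : stages F (m + 1) = stepSt (F m) (stages F m) := rfl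
            rw [hst, stepSt, dif_neg h, hce]
            exact strTrue_mono (tidy_prefix _ _) (strTrue_appendClaim.2 (Or.inr rfl))
          · exact absurd h' hm
  · push_neg at hdes
    have hc : c < (stages F (c+1)).str.length :=
      lt_of_lt_of_le (Nat.lt_succ_self c) (stages_len_le F (c+1))
    obtain ⟨y, hy, hyc⟩ := step_hasClaim (F (c+1)) (stages F (c+1)) hc (hdes (c+1))
    exact ⟨y, ⟨c + 2, hy⟩, hyc⟩

/-! ### Facts about a designation stage -/

theorem stages_succ_eq (e : ℕ) (h : ¬ KWit (F e) (stages F e)) :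
    stages F (e + 1) = ⟨tidy (appendClaim (stages F e).str (stages F e).str.length false)
      ((stages F e).str.length :: (stages F e).des),
      (stages F e).str.length :: (stages F e).des⟩ := by
  have hst : stages F (e + 1) = stepSt (F e) (stages F e) := rfl
  rw [hst, stepSt, dif_neg h]

theorem ystar_mem (e : ℕ) (h : ¬ KWit (F e) (stages F e)) :
    claimPos (stages F e).str (stages F e).str.length false ∈ limA F := by
  refine ⟨e + 1, ?_⟩
  rw [stages_succ_eq F e h]
  exact strTrue_mono (tidy_prefix _ _) (strTrue_appendClaim.2 (Or.inr rfl))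

/-- at a designation stage, the designated claim is the unique one in `limA`. -/
theorem claim_unique (e : ℕ) (h : ¬ KWit (F e) (stages F e)) :
    ∀ y, y ∈ limA F → coordOf y = (stages F e).str.length →
      y = claimPos (stages F e).str (stages F e).str.length false := by
  intro y hyA hyc
  rcases Nat.lt_or_ge y (stages F (e + 1)).str.length with h1 | h1
  · have hy' : strTrue (stages F (e + 1)).str y := (limA_iff F h1).1 hyA
    rw [stages_succ_eq F e h] at hy'
    rcases tidyGo_sub _ _ _ y hy' with h2 | h2
    · rcases strTrue_appendClaim.1 h2 with h3 | h3
      · exfalso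
        have h4 := strTrue_lt h3
        have h5 : coordOf y ≤ y := Nat.unpair_left_le y
        omega
      · exact h3
    · exfalso
      exact h2 (by rw [hyc]; exact List.mem_cons_self)
  · exfalso
    have h2 := goodChain F (e := e + 1) h1 hyA
    rw [stages_succ_eq F e h] at h2
    exact h2 (by rw [hyc]; exact List.mem_cons_self)

/-! ### Auxiliary list lemmas for the kill -/

theorem mapRange_getD {M x : ℕ} {f : ℕ → Bool} (hx : x < M) :
    ((List.range M).map f).getD x false = f x := by
  rw [List.getD_eq_getElem?_getD, List.getElem?_map, List.getElem?_range hx]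
  rfl

theorem strTrue_mapRange {M x : ℕ} {f : ℕ → Bool} :
    strTrue ((List.range M).map f) x ↔ x < M ∧ f x = true := by
  constructor
  · intro hT
    have hx := strTrue_lt hT
    simp at hx
    refine ⟨hx, ?_⟩
    rw [strTrue, mapRange_getD hx] at hT
    exact hT
  · rintro ⟨hx, hf⟩
    rw [strTrue, mapRange_getD hx]
    exact hf

theorem foldr_max_bound (σ : FinInfo) : ∀ p ∈ σ, p.1 ≤ σ.foldr (fun p m => max p.1 m) 0 := by
  induction σ with
  | nil => intro p hp; simp at hp
  | cons q l ih =>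
    intro p hp
    rcases List.mem_cons.1 hp with rfl | hp'
    · exact le_max_left _ _
    · exact le_trans (ih p hp') (le_max_right _ _)

/-! ### The kill: at a non-K stage, the functional diverges on the deleted variant -/

theorem kill (e : ℕ) (h : ¬ KWit (F e) (stages F e)) (b : Bool)
    (hb : (F e).HaltsT
      (limA F \ {claimPos (stages F e).str (stages F e).str.length false})
      (stages F e).str.length b) : False := by
  classical
  obtain ⟨k, σ, hax, hag⟩ := hb
  set L := (stages F e).str.length with hL
  set ystar := claimPos (stages F e).str L false with hystar
  set C : Set ℕ := limA F \ {ystar} with hC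
  set M := L + (σ.foldr (fun p m => max p.1 m) 0) + 1 with hM
  have hMp : ∀ p ∈ σ, p.1 < M := fun p hp =>
    lt_of_le_of_lt (foldr_max_bound σ p hp) (by omega)
  have hLM : L < M := by omega
  set f : ℕ → Bool := fun x => decide (x ∈ C) with hf
  set β := (List.range M).map f with hβ
  have hβlen : β.length = M := by simp [hβ]
  have hβT : ∀ x, strTrue β x ↔ (x ∈ C ∧ x < M) := by
    intro x
    rw [hβ, strTrue_mapRange, hf]
    constructor
    · rintro ⟨h1, h2⟩; exact ⟨of_decide_eq_true h2, h1⟩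
    · rintro ⟨h1, h2⟩; exact ⟨h2, decide_eq_true h1⟩
  have hLys : L < ystar := length_lt_claimPos _ _ _
  have huniq := claim_unique F e h
  -- β extends the current condition
  have hpre : (stages F e).str <+: β := by
    rw [List.prefix_iff_eq_take]
    have h1 : β.take L = (List.range L).map f := by
      rw [hβ, ← List.map_take, List.take_range, Nat.min_eq_left (le_of_lt hLM)]
    rw [← hL, h1]
    refine List.ext_getElem (by simp [hL]) ?_
    intro i h1 h2
    have hiL : i < L := by simpa [hL] using h1
    have hiys : i ≠ ystar := by omega
    have hiA : i ∈ limA F ↔ strTrue (stages F e).str i := limA_iff F (by omega)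
    have : f i = decide (i ∈ C) := rfl
    rw [List.getElem_map, List.getElem_range]
    have hstr : strTrue (stages F e).str i ↔ (stages F e).str[i] = true := by
      rw [strTrue, List.getD_eq_getElem?_getD, List.getElem?_eq_getElem hiL]
      rfl
    rcases Bool.eq_false_or_eq_true ((stages F e).str[i]) with hv | hv
    · rw [hv]
      symm
      show decide (i ∈ C) = true
      apply decide_eq_true
      refine ⟨?_, hiys⟩
      rw [hiA, hstr]
      exact hv
    · rw [hv]
      symm
      show decide (i ∈ C) = false
      apply decide_eq_false
      intro hmem
      have hh : i ∈ limA F := hmem.1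
      rw [hiA, hstr, hv] at hh
      simp at hh
  -- the appended fake claim
  set bb := !b with hbb
  set y' := claimPos β L bb with hy'
  set β' := appendClaim β L bb with hβ'
  have hMy' : M < y' := by
    have := length_lt_claimPos β L bb
    omega
  refine h ⟨β', hpre.trans (prefix_appendClaim _ _ _), ?_, k, σ, L, b, hax, ?_, ?_, y', ?_, ?_⟩
  · -- GE condition
    intro x hx hT
    rw [hβ'] at hT
    rcases strTrue_appendClaim.1 hT with h1 | h1
    · have h2 := (hβT x).1 h1
      exact goodChain F (e := e) hx h2.1.1
    · rw [h1, ← hy', hy', coordOf_claimPos]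
      intro hmem
      exact absurd (stages_desLt F e L hmem) (lt_irrefl _)
  · -- positions
    intro p hp
    have h1 := hMp p hp
    rw [hβ', length_appendClaim]
    have := length_lt_claimPos β L bb
    omega
  · -- agreement
    intro p hp
    rw [hag p hp]
    have h1 := hMp p hp
    constructor
    · intro hmem
      show strTrue β' p.1
      rw [hβ']
      exact strTrue_appendClaim.2 (Or.inl ((hβT p.1).2 ⟨hmem, h1⟩))
    · intro hmem
      have hT : strTrue β' p.1 := hmem
      rw [hβ'] at hT
      rcases strTrue_appendClaim.1 hT with h2 | h2
      · exact ((hβT p.1).1 h2).1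
      · exfalso; rw [← hy'] at h2; omega
  · -- minClaim
    constructor
    · constructor
      · show strTrue β' y'
        rw [hβ']
        exact strTrue_appendClaim.2 (Or.inr rfl)
      · rw [hy', coordOf_claimPos]
    · rintro z hz ⟨hzT, hzc⟩
      have hT : strTrue β' z := hzT
      rw [hβ'] at hT
      rcases strTrue_appendClaim.1 hT with h1 | h1
      · have h2 := (hβT z).1 h1
        have h3 := huniq z h2.1.1 hzc
        exact h2.1.2 (by rw [h3]; exact rfl)
      · rw [← hy'] at h1; omega
  · rw [hy', bitOf_claimPos, hbb]

/-! ### The K case: the functional is wrong on `limA` -/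

theorem kcase (e : ℕ) (h : KWit (F e) (stages F e))
    (hFE : (F e).FunEq (limA F) (limB F)) : False := by
  obtain ⟨hpre, hGE, k, σ, n, b, hax, hpos, hag, y, hmin, hbit⟩ := Classical.choose_spec h
  set β := Classical.choose h with hβ
  have hsucc : stages F (e + 1) = ⟨tidy (β ++ [false]) (stages F e).des,
      (stages F e).des⟩ := by
    have hst : stages F (e + 1) = stepSt (F e) (stages F e) := rfl
    rw [hst, stepSt, dif_pos h]
  have hβpre : β <+: (stages F (e + 1)).str := by
    rw [hsucc]
    exact (List.prefix_append β [false]).trans (tidy_prefix _ _)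
  have hβlen : β.length ≤ (stages F (e + 1)).str.length := hβpre.length_le
  have hβA : ∀ x, x < β.length → (strTrue β x ↔ x ∈ limA F) := by
    intro x hx
    rw [limA_iff F (e := e + 1) (by omega), strTrue_prefix_iff hβpre hx]
  have hagA : AgreesSet σ (limA F) := by
    intro p hp
    rw [hag p hp]
    exact hβA p.1 (hpos p hp)
  have hHalt : (F e).HaltsT (limA F) n b := ⟨k, σ, hax, hagA⟩
  have hcb := hFE.2 n b hHalt
  have hyβ : y < β.length := strTrue_lt hmin.1.1
  have hminA : minClaim (limA F) n y := by
    constructor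
    · exact ⟨(hβA y hyβ).1 hmin.1.1, hmin.1.2⟩
    · rintro z hz ⟨hzA, hzc⟩
      exact hmin.2 z hz ⟨(hβA z (by omega)).2 hzA, hzc⟩
  have hBn : n ∈ limB F ↔ bitOf y = true := mem_decodeB_iff hminA
  rw [hbit] at hBn
  cases b
  · have h1 : n ∈ limB F := hBn.mpr (by simp)
    have h2 := hcb.2 h1
    simp at h2
  · have h1 : n ∈ limB F := hcb.1 rfl
    have h2 := hBn.mp h1
    simp at h2

/-! ### Φ₀ works on `limA` -/

theorem Phi0_totalOn : Phi0.TotalOn (limA F) := by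
  intro n
  classical
  have hex : ∃ y, y ∈ limA F ∧ coordOf y = n := all_claimed F n
  set y := Nat.find hex with hy
  obtain ⟨hyA, hyc⟩ := Nat.find_spec hex
  refine ⟨bitOf y, y, sigma0 y, ?_, ?_⟩
  · show axs0 y = _
    simp only [axs0, hy, hyc]
  · intro p hp
    rcases mem_sigma0 hp with rfl | ⟨hlt, hco, hfa⟩
    · simpa using hyA
    · rw [hfa]
      simp only [Bool.false_eq_true, false_iff]
      intro hmem
      exact Nat.find_min hex hlt ⟨hmem, by rw [hco, hyc]⟩

theorem Phi0_funEq : Phi0.FunEq (limA F) (limB F) := by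
  refine ⟨Phi0_totalOn F, ?_⟩
  rintro n b ⟨k, σ, hax, hag⟩
  have hax' : axs0 k = some (σ, n, b) := hax
  rw [axs0, Option.some_inj, Prod.mk.injEq, Prod.mk.injEq] at hax'
  obtain ⟨hσ, hn, hb⟩ := hax'
  subst hσ hn hb
  exact (mem_decodeB_iff (sigma0_pin hag)).symm

theorem Phi0_ubfb : ∀ m : ℕ, ∀ᶠ n in Filter.atTop, ¬ Phi0.QueriesAt (limA F) n m := by
  intro m
  rw [Filter.eventually_atTop]
  refine ⟨coordOf m + 1, fun n hn hq => ?_⟩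
  obtain ⟨k, σ, b, hax, hag, hfirst, p, hp, hpm⟩ := hq
  have hax' : axs0 k = some (σ, n, b) := hax
  rw [axs0, Option.some_inj, Prod.mk.injEq, Prod.mk.injEq] at hax'
  obtain ⟨hσ, hn, hb⟩ := hax'
  subst hσ
  rcases mem_sigma0 hp with h1 | ⟨hlt, hco, hfa⟩
  · have hpk : p.1 = k := by rw [h1]
    have hkm : k = m := hpk.symm.trans hpm
    rw [hkm] at hn
    omega
  · rw [hpm] at hco
    omega

/-! ### Enumerating all Turing functionals -/

instance : Nonempty TuringFunctional :=
  ⟨⟨fun _ => none, Computable.const none,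
    fun k₁ k₂ σ₁ σ₂ n b₁ b₂ h₁ _ _ => by simp at h₁⟩⟩

theorem exists_enum : ∃ F : ℕ → TuringFunctional, Function.Surjective F := by
  have hcode : ∀ Φ : TuringFunctional, ∃ c : Nat.Partrec.Code,
      c.eval = fun n => Part.some (Encodable.encode (Φ.axs n)) := by
    intro Φ
    have h1 : Computable fun n => Encodable.encode (Φ.axs n) :=
      Computable.encode.comp Φ.axs_computable
    exact Nat.Partrec.Code.exists_code.1 (Partrec.nat_iff.1 h1)
  have hinj : Function.Injective fun Φ : TuringFunctional =>
      Classical.choose (hcode Φ) := by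
    intro Φ₁ Φ₂ hgg
    have e1 := Classical.choose_spec (hcode Φ₁)
    have e2 := Classical.choose_spec (hcode Φ₂)
    simp only at hgg
    rw [hgg, e2] at e1
    have haxs : Φ₁.axs = Φ₂.axs := by
      funext x
      have h3 := congrFun e1 x
      simp only [Part.some_inj] at h3
      exact Encodable.encode_injective h3.symm
    cases Φ₁; cases Φ₂
    simp only at haxs
    subst haxs
    rfl
  have : Countable TuringFunctional := hinj.countable
  exact exists_surjective_nat TuringFunctional




end
end UbfbNotMf

theorem exists_ubfb_red_not_mod_finite_red :
    ∃ A B : Set ℕ, UbfbRed B A ∧ ¬ ModFinRed B A := by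
  classical
  obtain ⟨F, hF⟩ := UbfbNotMf.exists_enum
  refine ⟨UbfbNotMf.limA F, UbfbNotMf.limB F,
    ⟨UbfbNotMf.Phi0, UbfbNotMf.Phi0_funEq F, UbfbNotMf.Phi0_ubfb F⟩, ?_⟩
  rintro ⟨Φ, hFE, hrob⟩
  obtain ⟨e, rfl⟩ := hF Φ
  by_cases h : UbfbNotMf.KWit (F e) (UbfbNotMf.stages F e)
  · exact UbfbNotMf.kcase F e h hFE
  · have hfin : {n | ¬ (n ∈ (UbfbNotMf.limA F \
        {UbfbNotMf.claimPos (UbfbNotMf.stages F e).str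
          (UbfbNotMf.stages F e).str.length false}) ↔ n ∈ UbfbNotMf.limA F)}.Finite := by
      refine Set.Finite.subset (Set.finite_singleton
        (UbfbNotMf.claimPos (UbfbNotMf.stages F e).str
          (UbfbNotMf.stages F e).str.length false)) ?_
      intro x hx
      simp only [Set.mem_setOf_eq] at hx
      by_contra hne
      apply hx
      constructor
      · intro h1; exact h1.1
      · intro h1; exact ⟨h1, hne⟩
    obtain ⟨b, hb⟩ := (hrob _ hfin).1 (UbfbNotMf.stages F e).str.length
    exact UbfbNotMf.kill F e h b hb
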